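/- For γ ≥ 1 and any ρ ∈ (0,1), the quantity f(ρ) := ρ(1-ρ)²h'(ρ) - ℓ(ρ)² is negative, where ℓ(ρ)² = 2(1-ρ)(h(1) - h(ρ))/(1+ρ) = -2(1-ρ)h(ρ)/(1+ρ). Equivalently, f(ρ) = ((1-ρ)/(1+ρ))·f̃(ρ) with f̃(ρ) = (γ+1)h(ρ) - (γ-1)ρ²h(ρ) + 1 - ρ², and f(ρ) < 0 on (0,1). -/

import Mathlib

open Set

/-- Polytropic enthalpy: `h(ρ) = (ρ^(γ-1) - 1)/(γ-1)` for `γ > 1`, `log ρ` for `γ = 1`. -/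
noncomputable def enthalpy (γ ρ : ℝ) : ℝ :=
  if γ = 1 then Real.log ρ else (ρ ^ (γ - 1) - 1) / (γ - 1)

/-- `ℓ(ρ)² = 2(1-ρ)(-h(ρ))/(1+ρ)`: the square of the shock-strength function
connecting density `ρ` to density `1`. -/
noncomputable def ellOneSq (γ ρ : ℝ) : ℝ :=
  2 * (1 - ρ) * (-(enthalpy γ ρ)) / (1 + ρ)

/-- `f(ρ) = ρ(1-ρ)²h'(ρ) - ℓ(ρ)²` with `h'(ρ) = ρ^(γ-2)`. -/
noncomputable def fshock (γ ρ : ℝ) : ℝ :=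
  ρ * (1 - ρ) ^ 2 * ρ ^ (γ - 2) - ellOneSq γ ρ

/-- `f̃(ρ) = (γ+1)h(ρ) - (γ-1)ρ²h(ρ) + 1 - ρ²`. -/
noncomputable def ftilde (γ ρ : ℝ) : ℝ :=
  (γ + 1) * enthalpy γ ρ - (γ - 1) * ρ ^ 2 * enthalpy γ ρ + (1 - ρ ^ 2)

/-- Key identity: `(γ-1)·h(ρ) + 1 = ρ^(γ-1)` for `ρ > 0`. -/
lemma enthalpy_key (γ ρ : ℝ) (hρ : 0 < ρ) :
    (γ - 1) * enthalpy γ ρ + 1 = ρ ^ (γ - 1) := by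
  unfold enthalpy
  by_cases hγ1 : γ = 1
  · simp [hγ1, Real.rpow_zero]
  · have : γ - 1 ≠ 0 := sub_ne_zero.mpr hγ1
    rw [if_neg hγ1]
    field_simp
    ring

lemma ftilde_neg (γ ρ : ℝ) (hγ : 1 ≤ γ) (hρ0 : 0 < ρ) (hρ1 : ρ < 1) :
    ftilde γ ρ < 0 := by
  unfold ftilde enthalpy
  by_cases hγ1 : γ = 1
  · rw [if_pos hγ1]
    subst hγ1
    have h1 : Real.log (ρ ^ 2) < ρ ^ 2 - 1 := by
      apply Real.log_lt_sub_one_of_pos (by positivity)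
      nlinarith
    rw [Real.log_pow] at h1
    push_cast at h1
    nlinarith
  · rw [if_neg hγ1]
    have hα : 0 < γ - 1 := by cases' lt_or_eq_of_le hγ with h h; linarith; exact absurd h.symm hγ1
    set α := γ - 1 with hαdef
    set L := -Real.log ρ with hLdef
    have hL : 0 < L := by
      have := Real.log_neg hρ0 hρ1
      simp [hLdef]; linarith
    have ht : ρ ^ α = Real.exp (-(α * L)) := by
      rw [Real.rpow_def_of_pos hρ0]
      ring_nf
      congr 1; rw [hLdef]; ring
    have hexp : α * L + 1 < Real.exp (α * L) :=
      Real.add_one_lt_exp (ne_of_gt (mul_pos hα hL))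
    have htpos : (0:ℝ) < ρ ^ α := Real.rpow_pos_of_pos hρ0 α
    have ht1 : ρ ^ α * (α * L + 1) < 1 := by
      calc ρ ^ α * (α * L + 1) < ρ ^ α * Real.exp (α * L) := by
            exact mul_lt_mul_of_pos_left hexp htpos
        _ = 1 := by rw [ht, ← Real.exp_add]; simp
    have h2 : 1 - ρ ^ 2 ≤ 2 * L := by
      have := Real.log_le_sub_one_of_pos (show (0:ℝ) < ρ ^ 2 by positivity)
      rw [Real.log_pow] at this
      push_cast at this
      simp only [hLdef]
      linarith
    -- c * t < 2 where c = α(1-ρ²)+2, t = ρ^α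
    have hct : (α * (1 - ρ ^ 2) + 2) * ρ ^ α < 2 := by
      nlinarith [mul_le_mul_of_nonneg_left h2 hα.le, mul_pos htpos (mul_pos hα hL)]
    have hαne : α ≠ 0 := ne_of_gt hα

    have expand : (γ + 1) * ((ρ ^ α - 1) / α) - α * ρ ^ 2 * ((ρ ^ α - 1) / α) + (1 - ρ ^ 2)
        = ((α * (1 - ρ ^ 2) + 2) * ρ ^ α - 2) / α := by
      field_simp
      ring
    rw [expand]
    apply div_neg_of_neg_of_pos _ hα
    linarith

/-- For `γ ≥ 1` and `ρ ∈ (0,1)`: `f(ρ) = ((1-ρ)/(1+ρ))·f̃(ρ)` and `f(ρ) < 0`. -/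
theorem fshock_eq_and_neg (γ : ℝ) (hγ : 1 ≤ γ) :
    ∀ ρ ∈ Set.Ioo (0 : ℝ) 1,
      fshock γ ρ = ((1 - ρ) / (1 + ρ)) * ftilde γ ρ ∧ fshock γ ρ < 0 := by
  intro ρ hρ
  obtain ⟨hρ0, hρ1⟩ := hρ
  have hkey := enthalpy_key γ ρ hρ0
  have hpow : ρ * ρ ^ (γ - 2) = ρ ^ (γ - 1) := by
    rw [show γ - 1 = 1 + (γ - 2) by ring, Real.rpow_add hρ0, Real.rpow_one]
  have h1ρ : (1:ℝ) + ρ ≠ 0 := by linarith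
  have heq : fshock γ ρ = ((1 - ρ) / (1 + ρ)) * ftilde γ ρ := by
    unfold fshock ellOneSq ftilde
    rw [show ρ * (1 - ρ) ^ 2 * ρ ^ (γ - 2) = (ρ * ρ ^ (γ - 2)) * (1 - ρ) ^ 2 by ring,
      hpow, ← hkey]
    field_simp
    ring
  refine ⟨heq, ?_⟩
  rw [heq]
  have hft := ftilde_neg γ ρ hγ hρ0 hρ1
  apply mul_neg_of_pos_of_neg _ hft
  exact div_pos (by linarith) (by linarith)
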